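/- Let z = (z_0, z_1, …, z_p) be a weakly increasing sequence of nonnegative integers with p ≥ n and z_p = n. Then the number of tuples a ∈ ℕⁿ with center sequence (z_0(a), …, z_p(a)) equal to z is exactly n!. -/

import Mathlib

/-- `z_p(a)`: the size of the largest subset `{x_1 > x_2 > ⋯ > x_q}` of `[n]`
with `a_{x_j} ≤ p + j` for all `j ∈ [q]`. -/
noncomputable def zlen (n p : ℕ) (a : Fin n → ℕ) : ℕ :=
  sSup {q : ℕ | ∃ x : Fin q → Fin n, StrictAnti x ∧ ∀ j : Fin q, a (x j) ≤ p + (j : ℕ) + 1}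

def gz : (n : ℕ) → ℕ → (Fin n → ℕ) → ℕ
  | 0, _, _ => 0
  | n+1, p, a => if a (Fin.last n) ≤ p + 1 then gz n (p+1) (Fin.init a) + 1
      else gz n p (Fin.init a)

def Sset (n p : ℕ) (a : Fin n → ℕ) : Set ℕ :=
  {q : ℕ | ∃ x : Fin q → Fin n, StrictAnti x ∧ ∀ j : Fin q, a (x j) ≤ p + (j : ℕ) + 1}

lemma zlen_def (n p : ℕ) (a : Fin n → ℕ) : zlen n p a = sSup (Sset n p a) := rfl

lemma Sset_zero_mem (n p : ℕ) (a : Fin n → ℕ) : 0 ∈ Sset n p a :=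
  ⟨Fin.elim0, fun i => i.elim0, fun j => j.elim0⟩

lemma Sset_le (n p : ℕ) (a : Fin n → ℕ) : ∀ q ∈ Sset n p a, q ≤ n := by
  rintro q ⟨x, hx, -⟩
  simpa using Fintype.card_le_of_injective x hx.injective

lemma zlen_mem (n p : ℕ) (a : Fin n → ℕ) : zlen n p a ∈ Sset n p a :=
  Nat.sSup_mem ⟨0, Sset_zero_mem n p a⟩ ⟨n, Sset_le n p a⟩

lemma zlen_le (n p : ℕ) (a : Fin n → ℕ) {q : ℕ} (h : q ∈ Sset n p a) : q ≤ zlen n p a :=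
  le_csSup ⟨n, Sset_le n p a⟩ h

lemma gz_le : ∀ (n p : ℕ) (a : Fin n → ℕ), gz n p a ≤ n
  | 0, _, _ => le_refl 0
  | n+1, p, a => by
      unfold gz
      split
      · exact Nat.succ_le_succ (gz_le n (p+1) _)
      · exact (gz_le n p _).trans (Nat.le_succ n)

lemma gz_mono_succ : ∀ (n p : ℕ) (a : Fin n → ℕ), gz n p a ≤ gz n (p+1) a
  | 0, _, _ => le_refl 0
  | n+1, p, a => by
      unfold gz
      rcases le_or_gt (a (Fin.last n)) (p+1) with h | h
      · rw [if_pos h, if_pos (h.trans (Nat.le_succ _))]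
        exact Nat.succ_le_succ (gz_mono_succ n (p+1) _)
      · rw [if_neg (not_le.2 h)]
        split
        · exact ((gz_mono_succ n p _).trans (gz_mono_succ n (p+1) _)).trans (Nat.le_succ _)
        · exact gz_mono_succ n p _

lemma gz_mono (n : ℕ) (a : Fin n → ℕ) : Monotone (fun p => gz n p a) :=
  monotone_nat_of_le_succ (fun p => gz_mono_succ n p a)

-- chain extension
lemma Sset_extend {n m p : ℕ} (a : Fin (n+1) → ℕ) (h : a (Fin.last n) ≤ p + 1)
    (hm : m ∈ Sset n (p+1) (Fin.init a)) : m + 1 ∈ Sset (n+1) p a := by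
  obtain ⟨x, hx, hxa⟩ := hm
  refine ⟨Fin.cons (Fin.last n) (fun j => (x j).castSucc), ?_, ?_⟩
  · intro i j hij
    induction j using Fin.cases with
    | zero => exact absurd hij (Fin.not_lt_zero i)
    | succ j' =>
      induction i using Fin.cases with
      | zero =>
        simp only [Fin.cons_succ, Fin.cons_zero]
        exact Fin.castSucc_lt_last _
      | succ i' =>
        simp only [Fin.cons_succ]
        exact Fin.castSucc_lt_castSucc_iff.2 (hx (Fin.succ_lt_succ_iff.1 hij))
  · intro j
    induction j using Fin.cases with
    | zero => simpa using h
    | succ j' =>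
      have := hxa j'
      simp only [Fin.cons_succ, Fin.val_succ]
      simp only [Fin.init] at this
      omega

-- chain restriction when the chain avoids `last`
lemma Sset_restrict {n q p : ℕ} (a : Fin (n+1) → ℕ)
    (x : Fin q → Fin (n+1)) (hx : StrictAnti x) (hxa : ∀ j : Fin q, a (x j) ≤ p + (j : ℕ) + 1)
    (hlast : ∀ j, x j ≠ Fin.last n) : q ∈ Sset n p (Fin.init a) := by
  refine ⟨fun j => (x j).castPred (hlast j), ?_, ?_⟩
  · intro i j hij
    simp only [Fin.lt_def, Fin.coe_castPred]
    exact Fin.lt_def.1 (hx hij)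
  · intro j
    show a ((x j).castPred (hlast j)).castSucc ≤ _
    rw [Fin.castSucc_castPred]
    exact hxa j

lemma Sset_embed {n m p : ℕ} (a : Fin (n+1) → ℕ) (hm : m ∈ Sset n p (Fin.init a)) :
    m ∈ Sset (n+1) p a := by
  obtain ⟨x, hx, hxa⟩ := hm
  exact ⟨fun j => (x j).castSucc,
    fun i j hij => Fin.castSucc_lt_castSucc_iff.2 (hx hij), fun j => hxa j⟩

lemma zlen_eq_gz : ∀ (n p : ℕ) (a : Fin n → ℕ), zlen n p a = gz n p a := by
  intro n
  induction n with
  | zero =>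
    intro p a
    have : Sset 0 p a = {0} := by
      ext q
      simp only [Sset, Set.mem_setOf_eq, Set.mem_singleton_iff]
      constructor
      · rintro ⟨x, -, -⟩
        by_contra hq
        exact (x ⟨0, Nat.pos_of_ne_zero hq⟩).elim0
      · rintro rfl
        exact ⟨Fin.elim0, fun i j h => i.elim0, fun j => j.elim0⟩
    rw [zlen_def, this, csSup_singleton]
    rfl
  | succ n ih =>
    intro p a
    have hmem : gz (n+1) p a ∈ Sset (n+1) p a := by
      by_cases hl : a (Fin.last n) ≤ p + 1
      · simp only [gz, if_pos hl]
        exact Sset_extend a hl (ih (p+1) (Fin.init a) ▸ zlen_mem n (p+1) (Fin.init a))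
      · simp only [gz, if_neg hl]
        exact Sset_embed a (ih p (Fin.init a) ▸ zlen_mem n p (Fin.init a))
    have hub : ∀ q ∈ Sset (n+1) p a, q ≤ gz (n+1) p a := by
      rintro q ⟨x, hx, hxa⟩
      match q, x, hx, hxa with
      | 0, x, hx, hxa => exact Nat.zero_le _
      | q'+1, x, hx, hxa =>
        by_cases hl : a (Fin.last n) ≤ p + 1
        · simp only [gz, if_pos hl]
          by_cases h0 : x 0 = Fin.last n
          · have htail : q' ∈ Sset n (p+1) (Fin.init a) := by
              refine Sset_restrict a (fun j => x j.succ) (fun i j hij => hx (by simpa using hij))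
                (fun j => ?_) (fun j => ?_)
              · have := hxa j.succ
                simp only [Fin.val_succ] at this
                show a (x j.succ) ≤ p + 1 + (j : ℕ) + 1
                omega
              · have hlt : x j.succ < x 0 := hx (Fin.succ_pos j)
                rw [h0] at hlt
                exact ne_of_lt hlt
            have := zlen_le n (p+1) (Fin.init a) htail
            rw [ih] at this
            omega
          · have hne : ∀ j, x j ≠ Fin.last n := by
              intro j
              have hle : x j ≤ x 0 := hx.antitone (Fin.zero_le j)
              have hlt : x 0 < Fin.last n := lt_of_le_of_ne (Fin.le_last _) h0
              exact ne_of_lt (lt_of_le_of_lt hle hlt)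
            have := zlen_le n p (Fin.init a) (Sset_restrict a x hx hxa hne)
            rw [ih] at this
            have h2 := gz_mono_succ n p (Fin.init a)
            omega
        · simp only [gz, if_neg hl]
          have hne : ∀ j, x j ≠ Fin.last n := by
            intro j hj
            have h00 : x 0 = Fin.last n :=
              le_antisymm (Fin.le_last _) (hj ▸ hx.antitone (Fin.zero_le j))
            by_cases hj0 : j = 0
            · refine hl ?_
              have := hxa 0
              rw [h00] at this
              simpa using this
            · have hlt : x j < x 0 := hx (Fin.pos_of_ne_zero hj0)
              rw [hj, h00] at hlt
              exact absurd hlt (lt_irrefl _)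
          have := zlen_le n p (Fin.init a) (Sset_restrict a x hx hxa hne)
          rw [ih] at this
          exact this
    exact le_antisymm (csSup_le ⟨0, Sset_zero_mem _ _ _⟩ hub) (zlen_le _ _ _ hmem)

lemma gz_snoc (n p : ℕ) (a' : Fin n → ℕ) (c : ℕ) :
    gz (n+1) p (Fin.snoc a' c) = if c ≤ p + 1 then gz n (p+1) a' + 1 else gz n p a' := by
  simp only [gz, Fin.snoc_last, Fin.init_snoc]

lemma snoc_inj {n : ℕ} {c : ℕ} : Function.Injective (fun a' : Fin n → ℕ => (Fin.snoc a' c : Fin (n+1) → ℕ)) := by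
  intro a b h
  funext i
  have := congrFun h i.castSucc
  simpa using this

def wmod (z : ℕ → ℕ) (t v : ℕ) : ℕ → ℕ := fun i =>
  if i < t then z i else if i = t then v else z (i-1) - 1

lemma wmod_lt {z : ℕ → ℕ} {t v i : ℕ} (h : i < t) : wmod z t v i = z i := if_pos h

lemma wmod_eq {z : ℕ → ℕ} {t v : ℕ} : wmod z t v t = v := by simp [wmod]

lemma wmod_gt {z : ℕ → ℕ} {t v i : ℕ} (h : t < i) : wmod z t v i = z (i-1) - 1 := by
  rw [wmod, if_neg (by omega), if_neg (by omega)]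

lemma wmod_mono {z : ℕ → ℕ} (hz : Monotone z) {t v : ℕ}
    (hW : t ≠ 0 → z (t-1) ≤ v) (hv : v < z t) : Monotone (wmod z t v) := by
  apply monotone_nat_of_le_succ
  intro i
  rcases lt_trichotomy (i+1) t with h | h | h
  · rw [wmod_lt (by omega), wmod_lt h]
    exact hz (Nat.le_succ i)
  · rw [wmod_lt (by omega)]
    have : wmod z t v (i+1) = v := h ▸ wmod_eq
    rw [this]
    have h2 := hW (by omega)
    have h3 : z i ≤ z (t-1) := hz (by omega)
    omega
  · rcases lt_trichotomy i t with h' | h' | h'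
    · omega
    · subst h'
      rw [wmod_eq, wmod_gt (by omega)]
      have hit : i + 1 - 1 = i := by omega
      rw [hit]
      omega
    · rw [wmod_gt h', wmod_gt (by omega)]
      have : z (i-1) ≤ z (i+1-1) := hz (by omega)
      omega

lemma ncard_biUnion_eq {α β : Type*} [DecidableEq β] (T : Finset β) (F : β → Set α)
    (hfin : ∀ b ∈ T, (F b).Finite)
    (hdisj : ∀ b ∈ T, ∀ c ∈ T, b ≠ c → Disjoint (F b) (F c)) :
    (⋃ b ∈ T, F b).ncard = ∑ b ∈ T, (F b).ncard := by
  induction T using Finset.induction_on with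
  | empty => simp
  | @insert a s ha ih =>
    have hfinU : (⋃ x ∈ s, F x).Finite := by
      apply Set.Finite.biUnion s.finite_toSet
      intro b hb
      exact hfin b (Finset.mem_insert_of_mem hb)
    have hd : Disjoint (F a) (⋃ x ∈ s, F x) := by
      rw [Set.disjoint_left]
      intro x hx hmem
      obtain ⟨b, hb, hxb⟩ := Set.mem_iUnion₂.1 hmem
      have hab : a ≠ b := fun h => ha (h ▸ hb)
      exact Set.disjoint_left.1
        (hdisj a (Finset.mem_insert_self a s) b (Finset.mem_insert_of_mem hb) hab) hx hxb
    rw [Finset.sum_insert ha, Finset.set_biUnion_insert,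
      Set.ncard_union_eq hd (hfin a (Finset.mem_insert_self a s)) hfinU,
      ih (fun b hb => hfin b (Finset.mem_insert_of_mem hb))
        (fun b hb c hc => hdisj b (Finset.mem_insert_of_mem hb) c (Finset.mem_insert_of_mem hc))]

lemma finite_of_ncard_factorial {α : Type*} {s : Set α} {n : ℕ} (h : s.ncard = n.factorial) :
    s.Finite := by
  by_contra hinf
  rw [Set.Infinite.ncard (by exact hinf)] at h
  exact absurd h.symm (Nat.factorial_pos n).ne'

lemma mem_decomp (n p : ℕ) (z : ℕ → ℕ) (hz : Monotone z)
    (t v : ℕ) (ht : t ≤ p) (hv : v < z t)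
    (a' : Fin n → ℕ) (hpos : ∀ i, 0 < a' i)
    (hseq : ∀ j ≤ p + 1, gz n j a' = wmod z t v j) :
    (∀ i : Fin (n+1), 0 < (Fin.snoc a' (t+1) : Fin (n+1) → ℕ) i) ∧
      ∀ j ≤ p, gz (n+1) j (Fin.snoc a' (t+1)) = z j := by
  constructor
  · intro i
    induction i using Fin.lastCases with
    | last => rw [Fin.snoc_last]; omega
    | cast i => rw [Fin.snoc_castSucc]; exact hpos i
  · intro j hj
    rw [gz_snoc]
    by_cases hjt : t ≤ j
    · rw [if_pos (by omega)]
      rw [hseq (j+1) (by omega), wmod_gt (by omega)]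
      have h1 : z t ≤ z j := hz hjt
      have h2 : j + 1 - 1 = j := by omega
      rw [h2]
      omega
    · rw [if_neg (by omega)]
      rw [hseq j (by omega), wmod_lt (by omega)]

lemma mem_decomp' (n p : ℕ) (z : ℕ → ℕ) (hz : Monotone z) (hzp : z p = n + 1)
    (a : Fin (n+1) → ℕ) (hpos : ∀ i, 0 < a i)
    (hseq : ∀ j ≤ p, gz (n+1) j a = z j) :
    ∃ t v, a (Fin.last n) = t + 1 ∧ t ≤ p ∧ (t ≠ 0 → z (t-1) ≤ v) ∧ v < z t ∧
      (∀ i, 0 < Fin.init a i) ∧ ∀ j ≤ p + 1, gz n j (Fin.init a) = wmod z t v j := by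
  set t := a (Fin.last n) - 1 with htdef
  set v := gz n t (Fin.init a) with hvdef
  have halast : a (Fin.last n) = t + 1 := by
    have := hpos (Fin.last n)
    omega
  have hunfold : ∀ j, gz (n+1) j a
      = if t ≤ j then gz n (j+1) (Fin.init a) + 1 else gz n j (Fin.init a) := by
    intro j
    simp only [gz]
    rw [halast]
    by_cases h : t ≤ j
    · rw [if_pos (by omega), if_pos h]
    · rw [if_neg (by omega), if_neg h]
  have ht : t ≤ p := by
    by_contra h
    have h1 := hseq p le_rfl
    rw [hunfold p, if_neg (by omega)] at h1
    have := gz_le n p (Fin.init a)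
    omega
  have hv : v < z t := by
    have h1 := hseq t ht
    rw [hunfold t, if_pos le_rfl] at h1
    have h2 := gz_mono_succ n t (Fin.init a)
    omega
  refine ⟨t, v, halast, ht, ?_, hv, fun i => hpos i.castSucc, ?_⟩
  · intro ht0
    have h1 := hseq (t-1) (by omega)
    rw [hunfold (t-1), if_neg (by omega)] at h1
    have h2 : gz n (t-1) (Fin.init a) ≤ gz n t (Fin.init a) := by
      have := gz_mono_succ n (t-1) (Fin.init a)
      have h3 : t - 1 + 1 = t := by omega
      rwa [h3] at this
    omega
  · intro j hj
    rcases lt_trichotomy j t with h | h | h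
    · rw [wmod_lt h]
      have h1 := hseq j (by omega)
      rw [hunfold j, if_neg (by omega)] at h1
      exact h1
    · rw [h, wmod_eq]
    · rw [wmod_gt h]
      have h1 := hseq (j-1) (by omega)
      rw [hunfold (j-1), if_pos (by omega)] at h1
      have h2 : j - 1 + 1 = j := by omega
      rw [h2] at h1
      omega

lemma gz_count : ∀ (n p : ℕ) (z : ℕ → ℕ), Monotone z → z p = n →
    {a : Fin n → ℕ | (∀ i, 0 < a i) ∧ ∀ j ≤ p, gz n j a = z j}.ncard = n.factorial := by
  intro n
  induction n with
  | zero =>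
    intro p z hz hzp
    have hset : {a : Fin 0 → ℕ | (∀ i, 0 < a i) ∧ ∀ j ≤ p, gz 0 j a = z j} = Set.univ := by
      ext a
      simp only [Set.mem_setOf_eq, Set.mem_univ, iff_true]
      refine ⟨fun i => i.elim0, fun j hj => ?_⟩
      have h1 : z j ≤ z p := hz hj
      show (0:ℕ) = z j
      omega
    rw [hset, Set.ncard_univ]
    have : Unique (Fin 0 → ℕ) := ⟨⟨fun i => i.elim0⟩, fun a => funext fun i => i.elim0⟩
    simp [Nat.card_unique]
  | succ n ih =>
    intro p z hz hzp
    classical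
    set F : ℕ × ℕ → Set (Fin (n+1) → ℕ) := fun tv =>
      (fun a' : Fin n → ℕ => (Fin.snoc a' (tv.1+1) : Fin (n+1) → ℕ)) ''
        {a' | (∀ i, 0 < a' i) ∧ ∀ j ≤ p+1, gz n j a' = wmod z tv.1 tv.2 j} with hF
    set T : Finset (ℕ × ℕ) := (Finset.range (p+1)).biUnion
      (fun t => (Finset.Ico (if t = 0 then 0 else z (t-1)) (z t)).image (fun v => (t, v)))
      with hT
    have hmemT : ∀ tv : ℕ × ℕ, tv ∈ T ↔
        tv.1 ≤ p ∧ (if tv.1 = 0 then 0 else z (tv.1 - 1)) ≤ tv.2 ∧ tv.2 < z tv.1 := by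
      rintro ⟨t, v⟩
      rw [hT, Finset.mem_biUnion]
      constructor
      · rintro ⟨t', ht', h2⟩
        rw [Finset.mem_image] at h2
        obtain ⟨v', hv', heq⟩ := h2
        rw [Prod.mk.injEq] at heq
        obtain ⟨rfl, rfl⟩ := heq
        rw [Finset.mem_Ico] at hv'
        rw [Finset.mem_range] at ht'
        exact ⟨by omega, hv'.1, hv'.2⟩
      · rintro ⟨h1, h2, h3⟩
        exact ⟨t, Finset.mem_range.2 (by omega),
          Finset.mem_image.2 ⟨v, Finset.mem_Ico.2 ⟨h2, h3⟩, rfl⟩⟩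
    have hinner : ∀ t v, t ≤ p → (t ≠ 0 → z (t-1) ≤ v) → v < z t →
        {a' : Fin n → ℕ | (∀ i, 0 < a' i) ∧
          ∀ j ≤ p+1, gz n j a' = wmod z t v j}.ncard = n.factorial := by
      intro t v ht hW hv
      apply ih (p+1) (wmod z t v) (wmod_mono hz hW hv)
      rw [wmod_gt (by omega : t < p+1)]
      have : p + 1 - 1 = p := by omega
      rw [this, hzp]
      omega
    have hFncard : ∀ tv ∈ T, (F tv).ncard = n.factorial := by
      intro tv htv
      obtain ⟨h1, h2, h3⟩ := (hmemT tv).1 htv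
      rw [hF]
      dsimp only
      rw [Set.ncard_image_of_injective _ snoc_inj]
      exact hinner tv.1 tv.2 h1 (fun h0 => by rwa [if_neg h0] at h2) h3
    have hFfin : ∀ tv ∈ T, (F tv).Finite := by
      intro tv htv
      obtain ⟨h1, h2, h3⟩ := (hmemT tv).1 htv
      apply Set.Finite.image
      exact finite_of_ncard_factorial
        (hinner tv.1 tv.2 h1 (fun h0 => by rwa [if_neg h0] at h2) h3)
    have hdisj : ∀ b ∈ T, ∀ c ∈ T, b ≠ c → Disjoint (F b) (F c) := by
      intro b hb c hc hne
      obtain ⟨hb1, -, -⟩ := (hmemT b).1 hb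
      obtain ⟨hc1, -, -⟩ := (hmemT c).1 hc
      rw [Set.disjoint_left]
      rintro a ⟨a', ⟨hpos', hseq'⟩, rfl⟩ ⟨b', ⟨hposb, hseqb⟩, hab⟩
      apply hne
      have hlast : c.1 + 1 = b.1 + 1 := by
        have := congrFun hab (Fin.last n)
        simpa using this
      have hfst : b.1 = c.1 := by omega
      have hinit : b' = a' := by
        funext i
        have := congrFun hab i.castSucc
        simpa using this
      have hsnd : b.2 = c.2 := by
        have e1 : gz n b.1 a' = wmod z b.1 b.2 b.1 := hseq' b.1 (by omega)
        have e2 : gz n c.1 b' = wmod z c.1 c.2 c.1 := hseqb c.1 (by omega)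
        rw [wmod_eq] at e1 e2
        rw [hinit, ← hfst, e1] at e2
        exact e2
      exact Prod.ext hfst hsnd
    have hdecomp : {a : Fin (n+1) → ℕ | (∀ i, 0 < a i) ∧ ∀ j ≤ p, gz (n+1) j a = z j}
        = ⋃ tv ∈ T, F tv := by
      ext a
      simp only [Set.mem_setOf_eq, Set.mem_iUnion]
      constructor
      · rintro ⟨hpos, hseq⟩
        obtain ⟨t, v, halast, ht, hW, hv, hpos', hseq'⟩ := mem_decomp' n p z hz hzp a hpos hseq
        refine ⟨(t, v), (hmemT (t,v)).2 ⟨ht, ?_, hv⟩, ?_⟩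
        · dsimp only
          split_ifs with h0
          · omega
          · exact hW h0
        · refine ⟨Fin.init a, ⟨hpos', hseq'⟩, ?_⟩
          dsimp only
          rw [← halast]
          exact Fin.snoc_init_self a
      · rintro ⟨tv, htv, a', ⟨hpos', hseq'⟩, rfl⟩
        obtain ⟨h1, h2, h3⟩ := (hmemT tv).1 htv
        exact mem_decomp n p z hz tv.1 tv.2 h1 h3 a' hpos' hseq'
    have hTcard : T.card = n + 1 := by
      rw [hT, Finset.card_biUnion]
      · have step : ∀ t ∈ Finset.range (p+1),
            ((Finset.Ico (if t = 0 then 0 else z (t-1)) (z t)).image (fun v => (t, v))).card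
              = (if t + 1 = 0 then 0 else z (t+1-1)) - (if t = 0 then 0 else z (t-1)) := by
          intro t ht
          rw [Finset.card_image_of_injective _
            (fun a b h => ((Prod.mk.injEq _ _ _ _).mp h).2), Nat.card_Ico]
          simp
        rw [Finset.sum_congr rfl step]
        have hWmono : Monotone (fun t => if t = 0 then 0 else z (t-1)) := by
          apply monotone_nat_of_le_succ
          intro t
          rw [if_neg (Nat.succ_ne_zero t)]
          split_ifs with h0
          · exact Nat.zero_le _
          · exact hz (by omega)
        rw [Finset.sum_range_tsub hWmono]
        simp [hzp]
      · intro t ht t' ht' hne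
        show Disjoint _ _
        rw [Finset.disjoint_left]
        intro x hx hx'
        rw [Finset.mem_image] at hx hx'
        obtain ⟨v, -, rfl⟩ := hx
        obtain ⟨v', -, h⟩ := hx'
        exact hne (((Prod.mk.injEq _ _ _ _).mp h).1.symm)
    rw [hdecomp, ncard_biUnion_eq T F hFfin hdisj, Finset.sum_congr rfl hFncard,
      Finset.sum_const, hTcard, Nat.factorial_succ]
    simp [Nat.mul_comm]


theorem stmt7 (n p : ℕ) (hpn : n ≤ p) (z : Fin (p + 1) → ℕ)
    (hz : Monotone z) (hzp : z (Fin.last p) = n) :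
    {a : Fin n → ℕ | (∀ i, 0 < a i) ∧ ∀ j : Fin (p + 1), zlen n (j : ℕ) a = z j}.ncard
      = Nat.factorial n := by
  set Z : ℕ → ℕ := fun i => z ⟨min i p, by omega⟩ with hZ
  have hZmono : Monotone Z := by
    intro i j hij
    exact hz (by simp only [Fin.mk_le_mk]; omega)
  have hZp : Z p = n := by
    have : (⟨min p p, by omega⟩ : Fin (p+1)) = Fin.last p := Fin.ext (by simp)
    rw [hZ]
    dsimp only
    rw [this, hzp]
  have hset : {a : Fin n → ℕ | (∀ i, 0 < a i) ∧ ∀ j : Fin (p + 1), zlen n (j : ℕ) a = z j}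
      = {a : Fin n → ℕ | (∀ i, 0 < a i) ∧ ∀ j ≤ p, gz n j a = Z j} := by
    ext a
    simp only [Set.mem_setOf_eq]
    apply and_congr_right'
    constructor
    · intro h j hj
      have h1 := h ⟨j, by omega⟩
      rw [zlen_eq_gz] at h1
      have h2 : Z j = z ⟨j, by omega⟩ :=
        congrArg z (Fin.ext (by simp only; omega))
      rw [h2]
      exact h1
    · intro h j
      rw [zlen_eq_gz]
      have hjp : (j : ℕ) ≤ p := by
        have := j.isLt
        omega
      have h1 := h (j : ℕ) hjp
      have h2 : Z (j : ℕ) = z j := congrArg z (Fin.ext (by simp only; omega))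
      rw [h1, h2]
  rw [hset]
  exact gz_count n p Z hZmono hZp
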